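/- Let g be a semisimple Lie algebra, λ ∈ ℚP, and α_i a simple root with h = ⟨λ, α_i^∨⟩ a positive integer. Then in the Verma module M(λ), the vector y_i^h · v_λ is singular, i.e., x_j · (y_i^h · v_λ) = 0 for all positive roots α_j. -/

import Mathlib

open UniversalEnvelopingAlgebra

lemma comm_pow {A : Type*} [Ring A] (u Y : A) (hc : u * Y = Y * u) :
    ∀ n : ℕ, u * Y ^ n = Y ^ n * u := by
  intro n
  induction n with
  | zero => simp
  | succ n ih => rw [pow_succ, ← mul_assoc, ih, mul_assoc, hc, mul_assoc]

lemma HY_pow {A : Type*} [Ring A] [Algebra ℚ A] (H Y : A)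
    (hc : H * Y = Y * H - (2:ℚ) • Y) :
    ∀ n : ℕ, H * Y ^ n = Y ^ n * H - ((2 * n : ℚ)) • Y ^ n := by
  intro n
  induction n with
  | zero => simp
  | succ n ih =>
    rw [pow_succ, ← mul_assoc, ih, sub_mul, smul_mul_assoc, mul_assoc, hc, mul_sub,
      ← mul_assoc, ← pow_succ, mul_smul_comm, ← pow_succ]
    push_cast
    match_scalars <;> ring

lemma XY_pow {A : Type*} [Ring A] [Algebra ℚ A] (X Y H : A)
    (hx : X * Y = Y * X + H)
    (hc : H * Y = Y * H - (2:ℚ) • Y) :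
    ∀ n : ℕ, X * Y ^ (n + 1) =
      Y ^ (n + 1) * X + ((n + 1 : ℚ)) • (Y ^ n * H) - (((n + 1) * n : ℚ)) • Y ^ n := by
  intro n
  induction n with
  | zero => simpa using hx
  | succ n ih =>
    have hYH : Y ^ n * H * Y = Y ^ (n+1) * H - (2:ℚ) • Y ^ (n+1) := by
      rw [mul_assoc, hc, mul_sub, mul_smul_comm, ← mul_assoc, ← pow_succ]
    rw [pow_succ, ← mul_assoc, ih, sub_mul, add_mul, smul_mul_assoc, smul_mul_assoc,
      mul_assoc, hx, hYH, mul_add, ← mul_assoc, ← pow_succ, ← pow_succ]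
    push_cast
    match_scalars <;> ring

/-- Lemma 3.1: let `g` be a (semisimple) Lie algebra over `ℚ` with Chevalley basis data
`x_j, y_j` (`j` indexing the positive roots, the simple ones embedded via `σ`) and
`h_k` (`k` indexing the simple roots), Cartan integers `C k j = ⟨α_j, α_k^∨⟩`.
Let `M(λ) = U(g)/J(λ)` be the Verma module of highest weight `λ = Σ a_k λ_k`, where
`J(λ)` is the left ideal generated by the `x_j` and the `h_k - (a_k - 1)`, and let
`v_λ` be the image of `1`.  If `α_i` is a simple root with `h = ⟨λ, α_i^∨⟩ = a_i`
a positive integer, then `y_i^h ⬝ v_λ` is singular: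
`x_j ⬝ (y_i^h ⬝ v_λ) = 0` for all positive roots `α_j`. -/
theorem verma_simple_singular_vector
    {L : Type*} [LieRing L] [LieAlgebra ℚ L]
    {s l : ℕ} (x y : Fin s → L) (hh : Fin l → L)
    (σ : Fin l → Fin s) (hσ : Function.Injective σ)
    (C : Fin l → Fin l → ℤ) (a : Fin l → ℚ)
    (i : Fin l) (h : ℕ) (hpos : 0 < h) (hai : a i = (h : ℚ))
    -- Chevalley relations involving the simple root vector `y_i`
    (hCii : C i i = 2)
    (hxyi : ⁅x (σ i), y (σ i)⁆ = hh i)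
    (hxyk : ∀ k : Fin l, k ≠ i → ⁅x (σ k), y (σ i)⁆ = 0)
    (hhy : ∀ k : Fin l, ⁅hh k, y (σ i)⁆ = -((C k i : ℚ) • y (σ i)))
    -- the positive nilpotent part is generated as a Lie algebra by the simple `x`'s
    (hgen : ∀ j : Fin s,
      x j ∈ LieSubalgebra.lieSpan ℚ L (Set.range fun k : Fin l => x (σ k))) :
    ∀ j : Fin s,
      (ι ℚ (x j) : UniversalEnvelopingAlgebra ℚ L) •
        (Submodule.Quotient.mk ((ι ℚ (y (σ i)) : UniversalEnvelopingAlgebra ℚ L) ^ h) :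
          UniversalEnvelopingAlgebra ℚ L ⧸
            Submodule.span (UniversalEnvelopingAlgebra ℚ L)
              ((Set.range fun j : Fin s => (ι ℚ (x j) : UniversalEnvelopingAlgebra ℚ L)) ∪
               (Set.range fun k : Fin l =>
                 (ι ℚ (hh k) : UniversalEnvelopingAlgebra ℚ L) -
                   algebraMap ℚ (UniversalEnvelopingAlgebra ℚ L) (a k - 1)))) = 0 := by
  intro j
  set U := UniversalEnvelopingAlgebra ℚ L with hU
  letI : LieRing U := LieRing.ofAssociativeRing
  letI : LieAlgebra ℚ U := LieAlgebra.ofAssociativeAlgebra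
  set J : Submodule U U := Submodule.span U
      ((Set.range fun j : Fin s => (ι ℚ (x j) : U)) ∪
       (Set.range fun k : Fin l => (ι ℚ (hh k) : U) - algebraMap ℚ U (a k - 1))) with hJdef
  have hJx : ∀ j' : Fin s, (ι ℚ (x j') : U) ∈ J :=
    fun j' => Submodule.subset_span (Or.inl ⟨j', rfl⟩)
  have hJh : ∀ k : Fin l, (ι ℚ (hh k) : U) - algebraMap ℚ U (a k - 1) ∈ J :=
    fun k => Submodule.subset_span (Or.inr ⟨k, rfl⟩)
  have hmul : ∀ (u v : U), v ∈ J → u * v ∈ J := fun u v hv => J.smul_mem u hv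
  let K : LieSubalgebra ℚ L :=
  { carrier := {z : L | (ι ℚ z : U) * (ι ℚ (y (σ i)) : U) ^ h ∈ J}
    add_mem' := by
      intro p q hp hq
      simp only [Set.mem_setOf_eq] at hp hq ⊢
      rw [map_add, add_mul]
      exact J.add_mem hp hq
    zero_mem' := by
      simp only [Set.mem_setOf_eq, map_zero, zero_mul]
      exact J.zero_mem
    smul_mem' := by
      intro c p hp
      simp only [Set.mem_setOf_eq] at hp ⊢
      rw [map_smul, smul_mul_assoc,
        ← algebraMap_smul U c ((ι ℚ p : U) * (ι ℚ (y (σ i)) : U) ^ h)]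
      exact J.smul_mem _ hp
    lie_mem' := by
      intro p q hp hq
      simp only [Set.mem_setOf_eq] at hp hq ⊢
      rw [LieHom.map_lie, Ring.lie_def, sub_mul, mul_assoc, mul_assoc]
      exact J.sub_mem (hmul _ _ hq) (hmul _ _ hp) }
  have hKi : x (σ i) ∈ K := by
    obtain ⟨n, hn⟩ : ∃ n, h = n + 1 := ⟨h - 1, (Nat.succ_pred_eq_of_pos hpos).symm⟩
    have hx : (ι ℚ (x (σ i)) : U) * ι ℚ (y (σ i))
        = ι ℚ (y (σ i)) * ι ℚ (x (σ i)) + ι ℚ (hh i) := by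
      have h1 := congrArg (ι ℚ (L := L)) hxyi
      rw [LieHom.map_lie, Ring.lie_def] at h1
      rw [← h1]; abel
    have hc : (ι ℚ (hh i) : U) * ι ℚ (y (σ i))
        = ι ℚ (y (σ i)) * ι ℚ (hh i) - (2:ℚ) • ι ℚ (y (σ i)) := by
      have h2 := congrArg (ι ℚ (L := L)) (hhy i)
      rw [LieHom.map_lie, Ring.lie_def, map_neg, map_smul, hCii,
        show ((2:ℤ):ℚ) = (2:ℚ) from by norm_num] at h2
      rw [sub_eq_iff_eq_add] at h2
      rw [h2, neg_add_eq_sub]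
    have key : (ι ℚ (x (σ i)) : U) * (ι ℚ (y (σ i)) : U) ^ (n + 1) =
        (ι ℚ (y (σ i)) : U) ^ (n + 1) * ι ℚ (x (σ i)) +
          ((n + 1 : ℚ)) • ((ι ℚ (y (σ i)) : U) ^ n *
            ((ι ℚ (hh i) : U) - algebraMap ℚ U (a i - 1))) := by
      rw [XY_pow _ _ _ hx hc n, mul_sub, hai, hn]
      have hce : (ι ℚ (y (σ i)) : U) ^ n * algebraMap ℚ U (((n + 1 : ℕ) : ℚ) - 1)
          = (((n + 1 : ℕ) : ℚ) - 1) • (ι ℚ (y (σ i)) : U) ^ n := by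
        rw [← Algebra.commutes, ← Algebra.smul_def]
      rw [hce]
      push_cast
      match_scalars <;> ring
    show (ι ℚ (x (σ i)) : U) * (ι ℚ (y (σ i)) : U) ^ h ∈ J
    rw [hn, key]
    refine J.add_mem (hmul _ _ (hJx _)) ?_
    rw [← algebraMap_smul U ((n : ℚ) + 1)]
    exact J.smul_mem _ (hmul _ _ (hJh i))
  have hKsimple : ∀ k : Fin l, x (σ k) ∈ K := by
    intro k
    rcases eq_or_ne k i with hki | hki
    · rw [hki]; exact hKi
    · have hcomm : (ι ℚ (x (σ k)) : U) * ι ℚ (y (σ i)) = ι ℚ (y (σ i)) * ι ℚ (x (σ k)) := by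
        have h3 := congrArg (ι ℚ (L := L)) (hxyk k hki)
        rw [LieHom.map_lie, Ring.lie_def, map_zero, sub_eq_zero] at h3
        exact h3
      show (ι ℚ (x (σ k)) : U) * (ι ℚ (y (σ i)) : U) ^ h ∈ J
      rw [comm_pow _ _ hcomm h]
      exact hmul _ _ (hJx _)
  have hxj : x j ∈ K := by
    have hle : LieSubalgebra.lieSpan ℚ L (Set.range fun k : Fin l => x (σ k)) ≤ K :=
      (LieSubalgebra.lieSpan_le).mpr (by rintro _ ⟨k, rfl⟩; exact hKsimple k)
    exact hle (hgen j)
  rw [← Submodule.Quotient.mk_smul, Submodule.Quotient.mk_eq_zero, smul_eq_mul]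
  exact hxj
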